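/- For μ ∈ (0,1) and a positive integer T, Σ_{t=1}^T 1/(1-μ^t) ≤ T + μ/(1-μ) - (1/ln μ)·ln((1-μ^T)/(1-μ)). -/

import Mathlib

lemma key_step (μ a : ℝ) (hμ0 : 0 < μ) (hμ1 : μ < 1) (ha0 : 0 < a) (ha1 : a < 1) :
    μ * a / (1 - μ * a) ≤ -(1 / Real.log μ) * (Real.log (1 - μ * a) - Real.log (1 - a)) := by
  have hb0 : 0 < μ * a := mul_pos hμ0 ha0
  have hba : μ * a < a := by nlinarith
  have h1b : 0 < 1 - μ * a := by nlinarith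
  have h1a : 0 < 1 - a := by nlinarith
  have hlogμ : Real.log μ < 0 := Real.log_neg hμ0 hμ1
  have hneg : 0 < -Real.log μ := by linarith
  set L := Real.log (1 - μ * a) - Real.log (1 - a) with hLdef
  have hL : (a - μ * a) / (1 - μ * a) ≤ L := by
    have h := Real.log_le_sub_one_of_pos (show 0 < (1 - a) / (1 - μ * a) by positivity)
    rw [Real.log_div (by linarith) (by linarith)] at h
    have h2 : (1 - a) / (1 - μ * a) - 1 = -((a - μ * a) / (1 - μ * a)) := by
      field_simp
      rw [div_sub_one (show (1 - a * μ) ≠ 0 from ne_of_gt (by nlinarith)), ← neg_div]; ring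
    rw [h2] at h
    linarith
  have hlog2 : -Real.log μ ≤ (1 - μ) / μ := by
    have h := Real.log_le_sub_one_of_pos (show 0 < μ⁻¹ by positivity)
    rw [Real.log_inv] at h
    have h3 : μ⁻¹ - 1 = (1 - μ) / μ := by field_simp
    linarith [h3 ▸ h]
  have step1 : μ * a * (-Real.log μ) ≤ a - μ * a := by
    have := mul_le_mul_of_nonneg_left hlog2 (le_of_lt hb0)
    have h4 : μ * a * ((1 - μ) / μ) = a - μ * a := by field_simp
    nlinarith
  have hL' : a - μ * a ≤ L * (1 - μ * a) := (div_le_iff₀ h1b).mp hL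
  have : μ * a / (1 - μ * a) ≤ L / (-Real.log μ) := by
    rw [div_le_div_iff₀ h1b hneg]
    linarith
  calc μ * a / (1 - μ * a) ≤ L / (-Real.log μ) := this
    _ = -(1 / Real.log μ) * L := by
      field_simp

theorem stmt3 (μ : ℝ) (hμ0 : 0 < μ) (hμ1 : μ < 1) (T : ℕ) (hT : 0 < T) :
    ∑ t ∈ Finset.Icc 1 T, 1 / (1 - μ ^ t)
      ≤ (T : ℝ) + μ / (1 - μ) - (1 / Real.log μ) * Real.log ((1 - μ ^ T) / (1 - μ)) := by
  have h1μ : 0 < 1 - μ := by linarith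
  induction T with
  | zero => omega
  | succ n ih =>
    rcases Nat.eq_zero_or_pos n with hn | hn
    · subst hn
      simp only [zero_add, pow_one, Finset.Icc_self, Finset.sum_singleton]
      rw [div_self (by linarith : (1:ℝ) - μ ≠ 0), Real.log_one]
      have : 1 / (1 - μ) = 1 + μ / (1 - μ) := by field_simp; ring
      rw [this]
      push_cast
      ring_nf
      nlinarith [Real.log_one]
    · have ih' := ih hn
      have hμn1 : μ ^ n < 1 := pow_lt_one₀ (le_of_lt hμ0) hμ1 (by omega)
      have hμn0 : 0 < μ ^ n := pow_pos hμ0 n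
      have hμs1 : μ ^ (n + 1) < 1 := pow_lt_one₀ (le_of_lt hμ0) hμ1 (by omega)
      have hμs0 : 0 < μ ^ (n + 1) := pow_pos hμ0 (n + 1)
      have h1n : 0 < 1 - μ ^ n := by linarith
      have h1s : 0 < 1 - μ ^ (n + 1) := by linarith
      rw [Finset.sum_Icc_succ_top (by omega : 1 ≤ n + 1)]
      have hkey := key_step μ (μ ^ n) hμ0 hμ1 hμn0 hμn1
      have hps : μ ^ (n + 1) = μ * μ ^ n := by rw [pow_succ]; ring
      rw [← hps] at hkey
      -- rewrite the logs of quotients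
      have hlogq : ∀ x : ℝ, 0 < x → Real.log (x / (1 - μ)) = Real.log x - Real.log (1 - μ) := by
        intro x hx
        exact Real.log_div (ne_of_gt hx) (ne_of_gt h1μ)
      rw [hlogq _ h1s]
      rw [hlogq _ h1n] at ih'
      have hsplit : 1 / (1 - μ ^ (n + 1)) = 1 + μ ^ (n + 1) / (1 - μ ^ (n + 1)) := by
        field_simp
        ring
      rw [hsplit]
      push_cast
      nlinarith [hkey, ih']
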